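/- Geometric uniqueness lemma: let τ₁,…,τ_ℓ be maps on k-simplices such that τᵢS is isometric to the simplex S scaled by 1/2 for all S, let λᵢ ∈ [−1,1], and set τ := Σᵢ λᵢτᵢ. Let v be a uniform k-gauge (equal on isometric simplices) and ω a k-germ with |ω_S| ≤ C·v(S) for all S. Then for every n ≥ 0, |⟨S, (τ')ⁿω⟩| ≤ C·ℓⁿ·v((2⁻ⁿ)S). If moreover v is (log₂ℓ)-Dini and τ'ω = ω, then ω = 0. -/

import Mathlib

/-- The euclidean space `ℝ^d` in which simplices live. -/
abbrev Pt (d : ℕ) := EuclideanSpace ℝ (Fin d)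

/-- Geometric uniqueness lemma: let `τ₁,…,τ_ℓ` be maps on `k`-simplices such that
`τᵢS` is isometric to `S` scaled by `1/2`, `λᵢ ∈ [−1,1]`, `τ := Σᵢ λᵢτᵢ` (acting on
germs by `(τ'ω)(S) = Σᵢ λᵢ ω(τᵢS)`), `v` a uniform nonnegative `k`-gauge and `ω` a
`k`-germ with `|ω_S| ≤ C·v(S)`. Then `|⟨S, (τ')ⁿω⟩| ≤ C·ℓⁿ·v((2⁻ⁿ)S)` for every
`n` and `S`; and if moreover `v` is `(log₂ℓ)`-Dini (i.e. `ℓⁿ·v((2⁻ⁿ)S) → 0`) and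
`τ'ω = ω`, then `ω = 0`. -/
theorem geometric_uniqueness {d k : ℕ} (ℓ : ℕ) (hℓ : 1 ≤ ℓ)
    (lam : Fin ℓ → ℝ) (hlam : ∀ i, lam i ∈ Set.Icc (-1 : ℝ) 1)
    (τ : Fin ℓ → (Fin (k + 1) → Pt d) → (Fin (k + 1) → Pt d))
    (hτ : ∀ i (S : Fin (k + 1) → Pt d),
      ∃ ι : Pt d → Pt d, Isometry ι ∧ ∀ j, ι ((2⁻¹ : ℝ) • S j) = τ i S j)
    (v : (Fin (k + 1) → Pt d) → ℝ)
    (hv0 : ∀ S, 0 ≤ v S)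
    (hvunif : ∀ S S' : Fin (k + 1) → Pt d,
      (∃ ι : Pt d → Pt d, Isometry ι ∧ ∀ j, ι (S j) = S' j) → v S = v S')
    (ω : (Fin (k + 1) → Pt d) → ℝ) (C : ℝ)
    (hbound : ∀ S, |ω S| ≤ C * v S) :
    (∀ (n : ℕ) (S : Fin (k + 1) → Pt d),
      |(fun ω' : (Fin (k + 1) → Pt d) → ℝ =>
          fun S' => ∑ i, lam i * ω' (τ i S'))^[n] ω S|
        ≤ C * (ℓ : ℝ) ^ n * v (fun j => ((2 : ℝ)⁻¹) ^ n • S j))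
    ∧ ((∀ S : Fin (k + 1) → Pt d,
          Filter.Tendsto (fun n : ℕ => (ℓ : ℝ) ^ n * v (fun j => ((2 : ℝ)⁻¹) ^ n • S j))
            Filter.atTop (nhds 0)) →
        (∀ S : Fin (k + 1) → Pt d, ∑ i, lam i * ω (τ i S) = ω S) →
        ∀ S, ω S = 0) := by
  set T : ((Fin (k + 1) → Pt d) → ℝ) → ((Fin (k + 1) → Pt d) → ℝ) :=
    fun ω' => fun S' => ∑ i, lam i * ω' (τ i S') with hT
  -- key scaling fact
  have key : ∀ (n : ℕ) (i : Fin ℓ) (S : Fin (k + 1) → Pt d),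
      v (fun j => ((2 : ℝ)⁻¹) ^ n • τ i S j)
        = v (fun j => ((2 : ℝ)⁻¹) ^ (n + 1) • S j) := by
    intro n i S
    obtain ⟨ι, hι, hιS⟩ := hτ i S
    refine (hvunif _ _ ⟨fun x => ((2 : ℝ)⁻¹) ^ n • ι ((2 : ℝ) ^ n • x), ?_, ?_⟩).symm
    · apply Isometry.of_dist_eq
      intro x y
      rw [dist_smul₀, hι.dist_eq, dist_smul₀, ← mul_assoc, Real.norm_eq_abs, Real.norm_eq_abs, ← abs_mul, ← mul_pow]
      norm_num
    · intro j
      have h1 : (2 : ℝ) ^ n • ((2 : ℝ)⁻¹ ^ (n + 1) • S j)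
          = (2⁻¹ : ℝ) • S j := by
        rw [smul_smul]
        congr 1
        rw [pow_succ]
        field_simp
        rw [← mul_pow]; norm_num
      show ((2 : ℝ)⁻¹) ^ n • ι ((2 : ℝ) ^ n • ((2 : ℝ)⁻¹ ^ (n + 1) • S j))
          = ((2 : ℝ)⁻¹) ^ n • τ i S j
      rw [h1, hιS]
  have main : ∀ (n : ℕ) (S : Fin (k + 1) → Pt d),
      |T^[n] ω S| ≤ C * (ℓ : ℝ) ^ n * v (fun j => ((2 : ℝ)⁻¹) ^ n • S j) := by
    intro n
    induction n with
    | zero => simpa using hbound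
    | succ n ih =>
      intro S
      rw [Function.iterate_succ_apply']
      have : T (T^[n] ω) S = ∑ i, lam i * (T^[n] ω) (τ i S) := rfl
      rw [this]
      calc |∑ i, lam i * (T^[n] ω) (τ i S)|
          ≤ ∑ i, |lam i * (T^[n] ω) (τ i S)| := Finset.abs_sum_le_sum_abs _ _
        _ ≤ ∑ _i : Fin ℓ, C * (ℓ : ℝ) ^ n * v (fun j => ((2 : ℝ)⁻¹) ^ (n + 1) • S j) := by
            apply Finset.sum_le_sum
            intro i _
            rw [abs_mul]
            have hli : |lam i| ≤ 1 := abs_le.mpr ⟨(hlam i).1, (hlam i).2⟩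
            have hbi : |(T^[n] ω) (τ i S)|
                ≤ C * (ℓ : ℝ) ^ n * v (fun j => ((2 : ℝ)⁻¹) ^ (n + 1) • S j) := by
              rw [← key n i S]; exact ih (τ i S)
            calc |lam i| * |(T^[n] ω) (τ i S)| ≤ 1 * |(T^[n] ω) (τ i S)| := by
                  apply mul_le_mul_of_nonneg_right hli (abs_nonneg _)
              _ = |(T^[n] ω) (τ i S)| := one_mul _
              _ ≤ _ := hbi
        _ = C * (ℓ : ℝ) ^ (n + 1) * v (fun j => ((2 : ℝ)⁻¹) ^ (n + 1) • S j) := by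
            rw [Finset.sum_const, Finset.card_univ, Fintype.card_fin, nsmul_eq_mul,
              pow_succ]
            ring
  refine ⟨main, ?_⟩
  intro hdini hfix S
  have hiter : ∀ n : ℕ, T^[n] ω = ω := by
    intro n
    induction n with
    | zero => rfl
    | succ n ih =>
      rw [Function.iterate_succ_apply', ih]
      funext S'
      exact hfix S'
  have hb : ∀ n : ℕ, |ω S| ≤ C * ((ℓ : ℝ) ^ n * v (fun j => ((2 : ℝ)⁻¹) ^ n • S j)) := by
    intro n
    have := main n S
    rw [hiter n] at this
    linarith [this]
  have hlim : Filter.Tendsto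
      (fun n : ℕ => C * ((ℓ : ℝ) ^ n * v (fun j => ((2 : ℝ)⁻¹) ^ n • S j)))
      Filter.atTop (nhds 0) := by
    simpa using (hdini S).const_mul C
  have h0 : |ω S| ≤ 0 := ge_of_tendsto hlim (Filter.Eventually.of_forall hb)
  exact abs_eq_zero.mp (le_antisymm h0 (abs_nonneg _))
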